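/- arXiv:1810.09080 — 2 statements merged into one kernel-verified Lean document; each statement's English description precedes it below -/
import Mathlib

section
/- Let w_j, w_k, w_l, w_m, m_α, m_β be nonzero complex numbers and set B = w_k/(m_α·w_j), E = w_l/(m_β·w_k), C = (w_j·w_l)/(w_m·w_k). Assume ‖B‖ < 1, ‖E‖ < 1, ‖C‖ < 1, and that B is not a nonpositive real number. Define f : ℂ → ℂ by f(w) = Li₂(w_m/(m_β·w_j)) + Li₂(w/(m_α·w_j)) − Li₂(w_l/(m_β·w)) − Li₂(w_l/(m_α·w_m)) + Li₂((w_j·w_l)/(w_m·w)) − π²/6 + log(w_m/(m_β·w_j))·log(w/(m_α·w_j)). Then f has derivative D at w_k, where D = (1/w_k)·(−log(1−B) − log(1−E) + log(1−C) + log(w_m/(m_β·w_j))), and moreover exp(w_k·D) = (w_j·w_l − w_k·w_m)/(((1/m_α)·w_k − w_j)·(m_β·w_k − w_l)). -/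
noncomputable def Li2 (z : ℂ) : ℂ := ∑' n : ℕ, z ^ (n + 1) / ((n : ℂ) + 1) ^ 2

lemma hasSum_Li2_deriv {z : ℂ} (hz : ‖z‖ < 1) (hz0 : z ≠ 0) :
    HasSum (fun n : ℕ => z ^ n / ((n : ℂ) + 1)) (-Complex.log (1 - z) / z) := by
  have h1 := Complex.hasSum_taylorSeries_neg_log hz
  have h2 : HasSum (fun n : ℕ => z ^ (n + 1) / ((n : ℂ) + 1)) (-Complex.log (1 - z)) := by
    have := (hasSum_nat_add_iff (f := fun n : ℕ => z ^ n / (n : ℂ)) 1).mpr (by simpa using h1)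
    simpa using this
  have h3 := h2.mul_left z⁻¹
  have e1 : ∀ n : ℕ, z⁻¹ * (z ^ (n + 1) / ((n : ℂ) + 1)) = z ^ n / ((n : ℂ) + 1) := by
    intro n
    rw [pow_succ]
    field_simp
  simp only [e1] at h3
  rw [div_eq_mul_inv, mul_comm]
  exact h3

lemma hasDerivAt_Li2 {z : ℂ} (hz : ‖z‖ < 1) (hz0 : z ≠ 0) :
    HasDerivAt Li2 (-Complex.log (1 - z) / z) z := by
  set r : ℝ := (1 + ‖z‖) / 2 with hr
  have hzr : ‖z‖ < r := by rw [hr]; linarith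
  have hr0 : 0 ≤ r := le_trans (norm_nonneg z) hzr.le
  have hr1 : r < 1 := by rw [hr]; linarith
  have key := hasDerivAt_tsum_of_isPreconnected
    (u := fun n : ℕ => r ^ n)
    (g := fun (n : ℕ) (w : ℂ) => w ^ (n + 1) / ((n : ℂ) + 1) ^ 2)
    (g' := fun (n : ℕ) (w : ℂ) => w ^ n / ((n : ℂ) + 1))
    (summable_geometric_of_lt_one hr0 hr1)
    (Metric.isOpen_ball (x := (0 : ℂ)) (ε := r))
    ((convex_ball (0 : ℂ) r).isPreconnected)
    (fun n w _ => by
      have hne : ((n : ℂ) + 1) ≠ 0 := Nat.cast_add_one_ne_zero n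
      have h := (hasDerivAt_pow (n + 1) w).div_const (((n : ℂ) + 1) ^ 2)
      convert h using 1
      · rfl
      push_cast
      field_simp)
    (fun n w hw => by
      have hw' : ‖w‖ < r := by simpa [Metric.mem_ball] using hw
      have hn1 : (1 : ℝ) ≤ ‖((n : ℂ) + 1)‖ := by
        have : ((n : ℂ) + 1) = ((n + 1 : ℕ) : ℂ) := by push_cast; ring
        rw [this, Complex.norm_natCast]
        exact_mod_cast Nat.one_le_iff_ne_zero.mpr (Nat.succ_ne_zero n)
      calc ‖w ^ n / ((n : ℂ) + 1)‖ = ‖w‖ ^ n / ‖((n : ℂ) + 1)‖ := by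
            rw [norm_div, norm_pow]
        _ ≤ ‖w‖ ^ n / 1 := by gcongr
        _ = ‖w‖ ^ n := div_one _
        _ ≤ r ^ n := pow_le_pow_left₀ (norm_nonneg w) hw'.le n)
    (y₀ := 0) (by simpa [Metric.mem_ball] using lt_of_le_of_lt (norm_nonneg z) hzr)
    (by simpa using summable_zero)
    (y := z) (by simpa [Metric.mem_ball] using hzr)
  have := (hasSum_Li2_deriv hz hz0).tsum_eq
  rw [this] at key
  exact key


lemma aux_div1 (L x y : ℂ) (hx : x ≠ 0) (hy : y ≠ 0) : L / (x / y) * (1 / y) = L / x := by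
  field_simp

lemma aux_div2 (L a b w : ℂ) (ha : a ≠ 0) (hb : b ≠ 0) (hw : w ≠ 0) :
    L / (a / (b * w)) * ((0 * (b * w) - a * (b * 1)) / (b * w) ^ 2) = -(L / w) := by
  field_simp
  ring

lemma aux_div4 (L x y : ℂ) (hx : x ≠ 0) (hy : y ≠ 0) : L * ((x / y)⁻¹ * (1 / y)) = L / x := by
  field_simp

set_option maxHeartbeats 1000000 in
/-- The crossing potential of a positive crossing, viewed as a function of the
region variable `w_k`, has derivative `D` at `w_k`, and `exp (w_k * D) = τ_{c,k}`. -/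
theorem crossing_potential_deriv_wk_pos
    (wj wk wl wm mα mβ : ℂ)
    (hwj : wj ≠ 0) (hwk : wk ≠ 0) (hwl : wl ≠ 0) (hwm : wm ≠ 0)
    (hmα : mα ≠ 0) (hmβ : mβ ≠ 0)
    (B E C D : ℂ)
    (hB : B = wk / (mα * wj)) (hE : E = wl / (mβ * wk))
    (hC : C = (wj * wl) / (wm * wk))
    (hBnorm : ‖B‖ < 1) (hEnorm : ‖E‖ < 1) (hCnorm : ‖C‖ < 1)
    (hBreal : ∀ r : ℝ, r ≤ 0 → (r : ℂ) ≠ B)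
    (hD : D = (1 / wk) * (-Complex.log (1 - B) - Complex.log (1 - E) + Complex.log (1 - C)
      + Complex.log (wm / (mβ * wj)))) :
    HasDerivAt (fun w : ℂ =>
      Li2 (wm / (mβ * wj)) + Li2 (w / (mα * wj)) - Li2 (wl / (mβ * w)) - Li2 (wl / (mα * wm))
        + Li2 ((wj * wl) / (wm * w)) - (Real.pi : ℂ) ^ 2 / 6
        + Complex.log (wm / (mβ * wj)) * Complex.log (w / (mα * wj))) D wk ∧
    Complex.exp (wk * D) =
      (wj * wl - wk * wm) / (((1 / mα) * wk - wj) * (mβ * wk - wl)) := by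
  have hmαwj : mα * wj ≠ 0 := mul_ne_zero hmα hwj
  have hmβwk : mβ * wk ≠ 0 := mul_ne_zero hmβ hwk
  have hwmwk : wm * wk ≠ 0 := mul_ne_zero hwm hwk
  have hB0 : B ≠ 0 := by rw [hB]; exact div_ne_zero hwk hmαwj
  have hE0 : E ≠ 0 := by rw [hE]; exact div_ne_zero hwl hmβwk
  have hC0 : C ≠ 0 := by rw [hC]; exact div_ne_zero (mul_ne_zero hwj hwl) hwmwk
  have h1B : (1 : ℂ) - B ≠ 0 := by
    intro h
    rw [sub_eq_zero] at h
    rw [← h] at hBnorm; simp at hBnorm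
  have h1E : (1 : ℂ) - E ≠ 0 := by
    intro h
    rw [sub_eq_zero] at h
    rw [← h] at hEnorm; simp at hEnorm
  have h1C : (1 : ℂ) - C ≠ 0 := by
    intro h
    rw [sub_eq_zero] at h
    rw [← h] at hCnorm; simp at hCnorm
  have hA0 : wm / (mβ * wj) ≠ 0 := div_ne_zero hwm (mul_ne_zero hmβ hwj)
  have hslit : wk / (mα * wj) ∈ Complex.slitPlane := by
    rw [Complex.mem_slitPlane_iff_not_le_zero]
    intro h
    rw [Complex.le_def] at h
    refine hBreal (wk / (mα * wj)).re (by simpa using h.1) ?_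
    rw [hB]
    exact Complex.ext (Complex.ofReal_re _) (by simpa using h.2.symm)
  -- inner derivatives
  have i2 : HasDerivAt (fun w : ℂ => w / (mα * wj)) (1 / (mα * wj)) wk :=
    (hasDerivAt_id wk).div_const _
  have i3 : HasDerivAt (fun w : ℂ => wl / (mβ * w))
      ((0 * (mβ * wk) - wl * (mβ * 1)) / (mβ * wk) ^ 2) wk :=
    (hasDerivAt_const wk wl).div ((hasDerivAt_id wk).const_mul mβ) hmβwk
  have i5 : HasDerivAt (fun w : ℂ => (wj * wl) / (wm * w))
      ((0 * (wm * wk) - (wj * wl) * (wm * 1)) / (wm * wk) ^ 2) wk :=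
    (hasDerivAt_const wk (wj * wl)).div ((hasDerivAt_id wk).const_mul wm) hwmwk
  have h2 := (hasDerivAt_Li2 (z := wk / (mα * wj)) (hB ▸ hBnorm) (hB ▸ hB0)).comp wk i2
  have h3 := (hasDerivAt_Li2 (z := wl / (mβ * wk)) (hE ▸ hEnorm) (hE ▸ hE0)).comp wk i3
  have h5 := (hasDerivAt_Li2 (z := (wj * wl) / (wm * wk)) (hC ▸ hCnorm) (hC ▸ hC0)).comp wk i5
  have h7 := ((Complex.hasDerivAt_log hslit).comp wk i2).const_mul
    (Complex.log (wm / (mβ * wj)))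
  have hsum := ((((((hasDerivAt_const wk (Li2 (wm / (mβ * wj)))).add h2).sub h3).sub
    (hasDerivAt_const wk (Li2 (wl / (mα * wm))))).add h5).sub
    (hasDerivAt_const wk ((Real.pi : ℂ) ^ 2 / 6))).add h7
  have hBne : wk / (mα * wj) ≠ 0 := hB ▸ hB0
  have hEne : wl / (mβ * wk) ≠ 0 := hE ▸ hE0
  have hCne : wj * wl / (wm * wk) ≠ 0 := hC ▸ hC0
  constructor
  · convert hsum using 1
    · rfl
    · rfl
    · rfl
    rw [hD, hB, hE, hC]
    rw [aux_div1 (-Complex.log (1 - wk / (mα * wj))) wk (mα * wj) hwk hmαwj,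
      aux_div2 (-Complex.log (1 - wl / (mβ * wk))) wl mβ wk hwl hmβ hwk,
      aux_div2 (-Complex.log (1 - wj * wl / (wm * wk))) (wj * wl) wm wk
        (mul_ne_zero hwj hwl) hwm hwk,
      aux_div4 (Complex.log (wm / (mβ * wj))) wk (mα * wj) hwk hmαwj]
    ring
  · have hwkD : wk * D = Complex.log (1 - C) + Complex.log (wm / (mβ * wj))
        - Complex.log (1 - B) - Complex.log (1 - E) := by
      rw [hD]; field_simp; ring
    rw [hwkD, Complex.exp_sub, Complex.exp_sub, Complex.exp_add,
      Complex.exp_log h1C, Complex.exp_log hA0, Complex.exp_log h1B, Complex.exp_log h1E,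
      hB, hE, hC]
    have hden1 : (1 : ℂ) - wk / (mα * wj) ≠ 0 := hB ▸ h1B
    have hden2 : (1 : ℂ) - wl / (mβ * wk) ≠ 0 := hE ▸ h1E
    have hf1 : (1 : ℂ) / mα * wk - wj ≠ 0 := by
      intro h
      rw [sub_eq_zero] at h
      apply hden1
      have hwkeq : wk = mα * wj := by field_simp at h; linear_combination h
      rw [hwkeq, div_self hmαwj, sub_self]
    have hf2 : mβ * wk - wl ≠ 0 := by
      intro h
      rw [sub_eq_zero] at h
      apply hden2
      rw [← h, div_self hmβwk, sub_self]
    have hg1 : mα * wj - wk ≠ 0 := by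
      intro h
      apply hden1
      have hwkeq : wk = mα * wj := by linear_combination -h
      rw [hwkeq, div_self hmαwj, sub_self]
    have e1 : (1 : ℂ) - wk / (mα * wj) = (mα * wj - wk) / (mα * wj) := by field_simp
    have e2 : (1 : ℂ) - wl / (mβ * wk) = (mβ * wk - wl) / (mβ * wk) := by field_simp
    have e3 : (1 : ℂ) - wj * wl / (wm * wk) = (wm * wk - wj * wl) / (wm * wk) := by field_simp
    rw [e1, e2, e3]
    have e4 : (1 : ℂ) / mα * wk - wj = -(mα * wj - wk) / mα := by field_simp; ring
    rw [e4]
    revert hg1 hf2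
    generalize mα * wj - wk = a
    generalize mβ * wk - wl = b
    intro hf2 hg1
    simp only [div_mul_eq_mul_div, div_div]
    have d1 : wm * wk * (a / (mα * wj)) * (b / (mβ * wk)) ≠ 0 :=
      mul_ne_zero (mul_ne_zero hwmwk (div_ne_zero hg1 hmαwj)) (div_ne_zero hf2 hmβwk)
    have d2 : -a * b / mα ≠ 0 := div_ne_zero (mul_ne_zero (neg_ne_zero.mpr hg1) hf2) hmα
    rw [div_eq_div_iff d1 d2]
    field_simp
    ring
end

section
/- Let w_j, w_k, w_l, w_m, m_α, m_β be nonzero complex numbers and set A' = (m_β·w_m)/w_j, B' = (m_α·w_k)/w_j, E' = (m_β·w_l)/w_k, C = (w_j·w_l)/(w_m·w_k). Assume ‖B'‖ < 1, ‖E'‖ < 1, ‖C‖ < 1, and that neither A' nor B' is a nonpositive real number. Define f : ℂ → ℂ by f(w) = −Li₂((m_β·w_m)/w_j) − Li₂((m_α·w)/w_j) + Li₂((m_β·w_l)/w) + Li₂((m_α·w_l)/w_m) − Li₂((w_j·w_l)/(w_m·w)) + π²/6 − log((m_β·w_m)/w_j)·log((m_α·w)/w_j). Then f has derivative D at w_k,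 where D = (1/w_k)·(log(1−B') + log(1−E') − log(1−C) − log A'), and moreover exp(w_k·D) = ((m_α·w_k − w_j)·((1/m_β)·w_k − w_l))/(w_j·w_l − w_k·w_m). -/
lemma hasDerivAt_Li2_s6 {z : ℂ} (hz : ‖z‖ < 1) :
    HasDerivAt Li2 (∑' n : ℕ, z ^ n / ((n : ℂ) + 1)) z := by
  set r : ℝ := (1 + ‖z‖) / 2 with hr
  have hzr : ‖z‖ < r := by rw [hr]; linarith
  have hr1 : r < 1 := by rw [hr]; linarith
  have hr0 : 0 < r := lt_of_le_of_lt (norm_nonneg z) hzr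
  exact hasDerivAt_tsum_of_isPreconnected
    (u := fun n : ℕ => r ^ n)
    (g := fun (n : ℕ) (w : ℂ) => w ^ (n + 1) / ((n : ℂ) + 1) ^ 2)
    (g' := fun (n : ℕ) (w : ℂ) => w ^ n / ((n : ℂ) + 1))
    (summable_geometric_of_lt_one hr0.le hr1)
    (Metric.isOpen_ball (x := (0 : ℂ)) (ε := r))
    ((convex_ball (0 : ℂ) r).isPreconnected)
    (fun n w _ => by
      have h1 : ((n : ℂ) + 1) ≠ 0 := Nat.cast_add_one_ne_zero n
      have h := (hasDerivAt_pow (n + 1) w).div_const (((n : ℂ) + 1) ^ 2)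
      convert h using 1
      · rfl
      push_cast
      field_simp)
    (fun n w hw => by
      rw [Metric.mem_ball, dist_zero_right] at hw
      have h1 : (1 : ℝ) ≤ (n : ℝ) + 1 := by have := Nat.cast_nonneg (α := ℝ) n; linarith
      calc ‖w ^ n / ((n : ℂ) + 1)‖ = ‖w‖ ^ n / ((n : ℝ) + 1) := by
            rw [norm_div, norm_pow, show ((n : ℂ) + 1) = ((n + 1 : ℕ) : ℂ) by push_cast; ring,
              Complex.norm_natCast]
            push_cast; ring
        _ ≤ r ^ n / 1 :=
            div_le_div₀ (by positivity) (pow_le_pow_left₀ (norm_nonneg w) hw.le n) one_pos h1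
        _ = r ^ n := by ring)
    (Metric.mem_ball_self hr0)
    (by
      refine Summable.congr (f := fun _ : ℕ => (0 : ℂ)) summable_zero fun n => ?_
      simp)
    (Metric.mem_ball.mpr (by rwa [dist_zero_right]))

lemma tsum_aux {z : ℂ} (hz : ‖z‖ < 1) (h0 : z ≠ 0) :
    (∑' n : ℕ, z ^ n / ((n : ℂ) + 1)) = -Complex.log (1 - z) / z := by
  have h1 : HasSum (fun n : ℕ => z ^ (n + 1) / ((n + 1 : ℕ) : ℂ)) (-Complex.log (1 - z)) := by
    rw [hasSum_nat_add_iff (f := fun n : ℕ => z ^ n / (n : ℂ)) 1]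
    simpa using Complex.hasSum_taylorSeries_neg_log hz
  have h2 := h1.div_const z
  have h3 : HasSum (fun n : ℕ => z ^ n / ((n : ℂ) + 1)) (-Complex.log (1 - z) / z) := by
    refine h2.congr_fun fun n => ?_
    have hn : ((n : ℂ) + 1) ≠ 0 := Nat.cast_add_one_ne_zero n
    push_cast
    rw [pow_succ]
    field_simp
  exact h3.tsum_eq

/-- The crossing potential of a negative crossing, viewed as a function of the
region variable `w_k`, has derivative `D` at `w_k`, and `exp (w_k * D) = τ_{c,k}`. -/
theorem crossing_potential_deriv_wk_neg
    (wj wk wl wm mα mβ : ℂ)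
    (hwj : wj ≠ 0) (hwk : wk ≠ 0) (hwl : wl ≠ 0) (hwm : wm ≠ 0)
    (hmα : mα ≠ 0) (hmβ : mβ ≠ 0)
    (A' B' E' C D : ℂ)
    (hA : A' = (mβ * wm) / wj) (hB : B' = (mα * wk) / wj)
    (hE : E' = (mβ * wl) / wk) (hC : C = (wj * wl) / (wm * wk))
    (hBnorm : ‖B'‖ < 1) (hEnorm : ‖E'‖ < 1) (hCnorm : ‖C‖ < 1)
    (hAreal : ∀ r : ℝ, r ≤ 0 → (r : ℂ) ≠ A')
    (hBreal : ∀ r : ℝ, r ≤ 0 → (r : ℂ) ≠ B')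
    (hD : D = (1 / wk) * (Complex.log (1 - B') + Complex.log (1 - E') - Complex.log (1 - C)
      - Complex.log A')) :
    HasDerivAt (fun w : ℂ =>
      -Li2 ((mβ * wm) / wj) - Li2 ((mα * w) / wj) + Li2 ((mβ * wl) / w) + Li2 ((mα * wl) / wm)
        - Li2 ((wj * wl) / (wm * w)) + (Real.pi : ℂ) ^ 2 / 6
        - Complex.log ((mβ * wm) / wj) * Complex.log ((mα * w) / wj)) D wk ∧
    Complex.exp (wk * D) =
      ((mα * wk - wj) * ((1 / mβ) * wk - wl)) / (wj * wl - wk * wm) := by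
  have hB0 : B' ≠ 0 := fun h => hBreal 0 le_rfl (by simp [h])
  have hE0 : E' ≠ 0 := by rw [hE]; exact div_ne_zero (mul_ne_zero hmβ hwl) hwk
  have hC0 : C ≠ 0 := by
    rw [hC]; exact div_ne_zero (mul_ne_zero hwj hwl) (mul_ne_zero hwm hwk)
  have hA0 : A' ≠ 0 := by rw [hA]; exact div_ne_zero (mul_ne_zero hmβ hwm) hwj
  have hBslit : B' ∈ Complex.slitPlane := by
    rw [Complex.mem_slitPlane_iff]
    by_contra h
    push_neg at h
    obtain ⟨h1, h2⟩ := h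
    exact hBreal B'.re h1 (by apply Complex.ext <;> simp [h2.symm])
  -- inner derivatives
  have i2 : HasDerivAt (fun w : ℂ => (mα * w) / wj) (mα * 1 / wj) wk :=
    ((hasDerivAt_id wk).const_mul mα).div_const wj
  have i3 : HasDerivAt (fun w : ℂ => (mβ * wl) / w)
      ((0 * wk - mβ * wl * 1) / wk ^ 2) wk :=
    (hasDerivAt_const wk (mβ * wl)).div (hasDerivAt_id wk) hwk
  have i5 : HasDerivAt (fun w : ℂ => (wj * wl) / (wm * w))
      ((0 * (wm * wk) - wj * wl * (wm * 1)) / (wm * wk) ^ 2) wk :=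
    (hasDerivAt_const wk (wj * wl)).div ((hasDerivAt_id wk).const_mul wm)
      (mul_ne_zero hwm hwk)
  -- composed derivatives
  have h2 : HasDerivAt (fun w : ℂ => Li2 ((mα * w) / wj))
      (-Complex.log (1 - B') / B' * (mα * 1 / wj)) wk := by
    have h := (hasDerivAt_Li2_s6 (z := (mα * wk) / wj) (hB ▸ hBnorm)).comp wk i2
    rw [tsum_aux (hB ▸ hBnorm) (hB ▸ hB0)] at h
    simpa [← hB, Function.comp_def] using h
  have h3 : HasDerivAt (fun w : ℂ => Li2 ((mβ * wl) / w))
      (-Complex.log (1 - E') / E' * ((0 * wk - mβ * wl * 1) / wk ^ 2)) wk := by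
    have h := (hasDerivAt_Li2_s6 (z := (mβ * wl) / wk) (hE ▸ hEnorm)).comp wk i3
    rw [tsum_aux (hE ▸ hEnorm) (hE ▸ hE0)] at h
    simpa [← hE, Function.comp_def] using h
  have h5 : HasDerivAt (fun w : ℂ => Li2 ((wj * wl) / (wm * w)))
      (-Complex.log (1 - C) / C *
        ((0 * (wm * wk) - wj * wl * (wm * 1)) / (wm * wk) ^ 2)) wk := by
    have h := (hasDerivAt_Li2_s6 (z := (wj * wl) / (wm * wk)) (hC ▸ hCnorm)).comp wk i5
    rw [tsum_aux (hC ▸ hCnorm) (hC ▸ hC0)] at h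
    simpa [← hC, Function.comp_def] using h
  have h7 : HasDerivAt (fun w : ℂ => Complex.log ((mα * w) / wj))
      (B'⁻¹ * (mα * 1 / wj)) wk := by
    have h := (Complex.hasDerivAt_log (hB ▸ hBslit)).comp wk i2
    simpa [← hB, Function.comp_def] using h
  have hF := (((((h2.const_sub (-Li2 ((mβ * wm) / wj))).add h3).add_const
      (Li2 ((mα * wl) / wm))).sub h5).add_const ((Real.pi : ℂ) ^ 2 / 6)).sub
      (h7.const_mul (Complex.log ((mβ * wm) / wj)))
  have hAlog : Complex.log ((mβ * wm) / wj) = Complex.log A' := by rw [hA]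
  -- simplify the four nonconstant derivative terms
  have e2 : -Complex.log (1 - B') / B' * (mα * 1 / wj)
      = -(Complex.log (1 - B') * (1 / wk)) := by
    rw [hB]; field_simp
  have e3 : -Complex.log (1 - E') / E' * ((0 * wk - mβ * wl * 1) / wk ^ 2)
      = Complex.log (1 - E') * (1 / wk) := by
    rw [hE]; field_simp; ring
  have e5 : -Complex.log (1 - C) / C *
      ((0 * (wm * wk) - wj * wl * (wm * 1)) / (wm * wk) ^ 2)
      = Complex.log (1 - C) * (1 / wk) := by
    rw [hC]; field_simp; ring
  have e7 : Complex.log ((mβ * wm) / wj) * (B'⁻¹ * (mα * 1 / wj))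
      = Complex.log A' * (1 / wk) := by
    rw [hAlog, hB]; field_simp
  constructor
  · convert hF using 1
    · rfl
    · rfl
    · rfl
    rw [hD, e2, e3, e5, e7]
    ring
  · have hwkD : wk * D = Complex.log (1 - B') + Complex.log (1 - E') - Complex.log (1 - C)
        - Complex.log A' := by
      rw [hD, ← mul_assoc, mul_one_div, div_self hwk, one_mul]
    have h1B : (1 : ℂ) - B' ≠ 0 := by
      intro h; rw [sub_eq_zero] at h; rw [← h] at hBnorm; simp at hBnorm
    have h1E : (1 : ℂ) - E' ≠ 0 := by
      intro h; rw [sub_eq_zero] at h; rw [← h] at hEnorm; simp at hEnorm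
    have h1C : (1 : ℂ) - C ≠ 0 := by
      intro h; rw [sub_eq_zero] at h; rw [← h] at hCnorm; simp at hCnorm
    have hden : wj * wl - wk * wm ≠ 0 := by
      intro h
      apply h1C
      rw [hC, sub_eq_zero.mp h, mul_comm wm wk, div_self (mul_ne_zero hwk hwm), sub_self]
    rw [hwkD, Complex.exp_sub, Complex.exp_sub, Complex.exp_add,
      Complex.exp_log h1B, Complex.exp_log h1E, Complex.exp_log h1C, Complex.exp_log hA0,
      div_div, div_eq_div_iff (mul_ne_zero h1C hA0) hden, hB, hE, hC, hA]
    field_simp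
    ring
end
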